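/- Two subspaces W and W' of V × V with dim_K W = dim_K W' = N lie in the same orbit of the action of GL(V) × GL(V) on subspaces of V × V given by (g₁, g₂) · W = (g₁ × g₂)(W) if and only if dim_K (W ∩ (V × 0)) = dim_K (W' ∩ (V × 0)) and dim_K (W ∩ (0 × V)) = dim_K (W' ∩ (0 × V)). -/

import Mathlib

open Module Submodule Set

section helpers

variable {K : Type*} [DivisionRing K] {M : Type*} [AddCommGroup M] [Module K M]

/-- A finite-dimensional submodule is the span of a linearly independent family. -/
lemma exists_indep_span (P : Submodule K M) [FiniteDimensional K P] {n : ℕ}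
    (h : finrank K P = n) :
    ∃ v : Fin n → M, LinearIndependent K v ∧ Submodule.span K (Set.range v) = P := by
  let b := (Module.finBasis K P).reindex (finCongr h)
  refine ⟨fun i => (b i : M), ?_, ?_⟩
  · exact b.linearIndependent.map' P.subtype P.ker_subtype
  · have hr : Set.range (fun i => (b i : M)) = P.subtype '' Set.range b := by
      rw [← Set.range_comp]; rfl
    rw [hr, Submodule.span_image, b.span_eq, Submodule.map_top, Submodule.range_subtype]

variable [FiniteDimensional K M]

/-- Extend a linearly independent family to a basis, with the number of new vectors
prescribed by dimension count. -/
lemma exists_basis_extend {ι : Type*} [Fintype ι] {n : ℕ} {v : ι → M}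
    (hv : LinearIndependent K v) (hcard : Fintype.card ι + n = finrank K M) :
    ∃ b : Basis (ι ⊕ Fin n) K M, ∀ i, b (Sum.inl i) = v i := by
  obtain ⟨T, hT⟩ := (Submodule.span K (Set.range v)).exists_isCompl
  have hS : finrank K (Submodule.span K (Set.range v)) = Fintype.card ι :=
    finrank_span_eq_card hv
  have hTrank : finrank K T = n := by
    have h2 := Submodule.finrank_add_eq_of_isCompl hT
    omega
  obtain ⟨w, hw_ind, hw_span⟩ := exists_indep_span T hTrank
  have hdisj : Disjoint (Submodule.span K (Set.range v)) (Submodule.span K (Set.range w)) := by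
    rw [hw_span]; exact hT.disjoint
  have hind := hv.sum_type hw_ind hdisj
  have hspan : ⊤ ≤ Submodule.span K (Set.range (Sum.elim v w)) := by
    rw [Set.Sum.elim_range, Submodule.span_union, hw_span, hT.codisjoint.eq_top]
  exact ⟨Basis.mk hind hspan, fun i => Basis.mk_apply hind hspan (Sum.inl i)⟩

variable {V : Type*} [AddCommGroup V] [Module K V] [FiniteDimensional K V]

/-- The standard generating family for a subspace of `V × V` built from two bases. -/
noncomputable def genFam {a b c : ℕ} (x : Basis ((Fin a ⊕ Fin c) ⊕ Fin b) K V)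
    (y : Basis ((Fin b ⊕ Fin c) ⊕ Fin a) K V) : Fin a ⊕ (Fin b ⊕ Fin c) → V × V :=
  Sum.elim (fun i => (x (Sum.inl (Sum.inl i)), 0))
    (Sum.elim (fun i => (0, y (Sum.inl (Sum.inl i))))
      (fun j => (x (Sum.inl (Sum.inr j)), y (Sum.inl (Sum.inr j)))))

/-- Every `N`-dimensional subspace of `V × V` (with `dim V = N`) with invariants
`a = dim (W ⊓ V×0)`, `b = dim (W ⊓ 0×V)` is in standard form for suitable bases. -/
lemma std_form {N a b c : ℕ} (hV : finrank K V = N) (W : Submodule K (V × V))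
    (hW : finrank K W = N) (ha : finrank K ↥(W ⊓ Submodule.fst K V V) = a)
    (hb : finrank K ↥(W ⊓ Submodule.snd K V V) = b) (hc : a + b + c = N) :
    ∃ (x : Basis ((Fin a ⊕ Fin c) ⊕ Fin b) K V) (y : Basis ((Fin b ⊕ Fin c) ⊕ Fin a) K V),
      W = Submodule.span K (Set.range (genFam x y)) := by
  set A := W ⊓ Submodule.fst K V V with hA_def
  set B := W ⊓ Submodule.snd K V V with hB_def
  have hAB_bot : A ⊓ B = ⊥ := by
    rw [eq_bot_iff]
    intro z hz
    rw [Submodule.mem_inf] at hz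
    have h1 : z ∈ Submodule.fst K V V ⊓ Submodule.snd K V V :=
      Submodule.mem_inf.mpr ⟨(Submodule.mem_inf.mp hz.1).2, (Submodule.mem_inf.mp hz.2).2⟩
    rwa [Submodule.fst_inf_snd] at h1
  have hdisjAB : Disjoint A B := disjoint_iff.mpr hAB_bot
  obtain ⟨uA, hA_ind, hA_span⟩ := exists_indep_span A ha
  obtain ⟨uB, hB_ind, hB_span⟩ := exists_indep_span B hb
  have hAB_le : A ⊔ B ≤ W := sup_le inf_le_left inf_le_left
  obtain ⟨C', hC'⟩ := (Submodule.comap W.subtype (A ⊔ B)).exists_isCompl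
  set C : Submodule K (V × V) := C'.map W.subtype with hC_def
  have hmap_comap : Submodule.map W.subtype (Submodule.comap W.subtype (A ⊔ B)) = A ⊔ B := by
    rw [Submodule.map_comap_subtype, inf_eq_right.mpr hAB_le]
  have hsupW : (A ⊔ B) ⊔ C = W := by
    rw [hC_def, ← hmap_comap, ← Submodule.map_sup, hC'.codisjoint.eq_top, Submodule.map_top,
      Submodule.range_subtype]
  have hdisjC : Disjoint (A ⊔ B) C := by
    rw [disjoint_iff, hC_def, ← hmap_comap,
      ← Submodule.map_inf _ (Submodule.injective_subtype W), hC'.disjoint.eq_bot,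
      Submodule.map_bot]
  have hCleW : C ≤ W := le_sup_right.trans hsupW.le
  have hABrank : finrank K ↥(A ⊔ B) = a + b := by
    have h2 := Submodule.finrank_sup_add_finrank_inf_eq A B
    rw [hAB_bot, ha, hb, finrank_bot] at h2
    omega
  have hCrank : finrank K ↥C = c := by
    have h3 := Submodule.finrank_sup_add_finrank_inf_eq (A ⊔ B) C
    rw [hsupW, hdisjC.eq_bot, finrank_bot, hW, hABrank] at h3
    omega
  obtain ⟨wc, hC_ind, hC_span⟩ := exists_indep_span C hCrank
  have hdisjAC : Disjoint A C := hdisjC.mono_left le_sup_left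
  have hdisjBC : Disjoint B C := hdisjC.mono_left le_sup_right
  have hdisjA_BC : Disjoint A (B ⊔ C) :=
    hdisjAB.disjoint_sup_right_of_disjoint_sup_left hdisjC
  have hdisjB_AC : Disjoint B (A ⊔ C) :=
    hdisjAB.symm.disjoint_sup_right_of_disjoint_sup_left (by rwa [sup_comm A B] at hdisjC)
  -- the first-coordinate family
  have hGAC_ind : LinearIndependent K (Sum.elim uA wc) :=
    hA_ind.sum_type hC_ind (by rw [hA_span, hC_span]; exact hdisjAC)
  have hGACspan : Submodule.span K (Set.range (Sum.elim uA wc)) = A ⊔ C := by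
    rw [Set.Sum.elim_range, Submodule.span_union, hA_span, hC_span]
  have hACsnd : Disjoint (A ⊔ C) (Submodule.snd K V V) := by
    rw [disjoint_iff, eq_bot_iff]
    intro z hz
    rw [Submodule.mem_inf] at hz
    have hzW : z ∈ W := (sup_le (le_sup_left.trans hAB_le) hCleW) hz.1
    have hzB : z ∈ B := Submodule.mem_inf.mpr ⟨hzW, hz.2⟩
    exact hdisjB_AC.le_bot (Submodule.mem_inf.mpr ⟨hzB, hz.1⟩)
  have hkerfst : LinearMap.ker (LinearMap.fst K V V) = Submodule.snd K V V := rfl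
  have hx₀ : LinearIndependent K ((LinearMap.fst K V V) ∘ Sum.elim uA wc) :=
    hGAC_ind.map (f := LinearMap.fst K V V) (by rw [hGACspan, hkerfst]; exact hACsnd)
  have hcard₁ : Fintype.card (Fin a ⊕ Fin c) + b = finrank K V := by
    rw [hV]; simp only [Fintype.card_sum, Fintype.card_fin]; omega
  obtain ⟨x, hx⟩ := exists_basis_extend hx₀ hcard₁
  -- the second-coordinate family
  have hGBC_ind : LinearIndependent K (Sum.elim uB wc) :=
    hB_ind.sum_type hC_ind (by rw [hB_span, hC_span]; exact hdisjBC)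
  have hGBCspan : Submodule.span K (Set.range (Sum.elim uB wc)) = B ⊔ C := by
    rw [Set.Sum.elim_range, Submodule.span_union, hB_span, hC_span]
  have hBCfst : Disjoint (B ⊔ C) (Submodule.fst K V V) := by
    rw [disjoint_iff, eq_bot_iff]
    intro z hz
    rw [Submodule.mem_inf] at hz
    have hzW : z ∈ W := (sup_le (le_sup_right.trans hAB_le) hCleW) hz.1
    have hzA : z ∈ A := Submodule.mem_inf.mpr ⟨hzW, hz.2⟩
    exact hdisjA_BC.le_bot (Submodule.mem_inf.mpr ⟨hzA, hz.1⟩)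
  have hkersnd : LinearMap.ker (LinearMap.snd K V V) = Submodule.fst K V V := rfl
  have hy₀ : LinearIndependent K ((LinearMap.snd K V V) ∘ Sum.elim uB wc) :=
    hGBC_ind.map (f := LinearMap.snd K V V) (by rw [hGBCspan, hkersnd]; exact hBCfst)
  have hcard₂ : Fintype.card (Fin b ⊕ Fin c) + a = finrank K V := by
    rw [hV]; simp only [Fintype.card_sum, Fintype.card_fin]; omega
  obtain ⟨y, hy⟩ := exists_basis_extend hy₀ hcard₂
  refine ⟨x, y, ?_⟩
  -- membership facts to identify the generating family
  have hmemA : ∀ i, uA i ∈ A := fun i => hA_span ▸ Submodule.subset_span (Set.mem_range_self i)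
  have hmemB : ∀ i, uB i ∈ B := fun i => hB_span ▸ Submodule.subset_span (Set.mem_range_self i)
  have hA2 : ∀ i, (uA i).2 = 0 := fun i =>
    (Submodule.mem_bot K).mp
      (Submodule.mem_comap.mp (Submodule.mem_inf.mp (hmemA i)).2)
  have hB1 : ∀ i, (uB i).1 = 0 := fun i =>
    (Submodule.mem_bot K).mp
      (Submodule.mem_comap.mp (Submodule.mem_inf.mp (hmemB i)).2)
  have hfun : genFam x y = Sum.elim uA (Sum.elim uB wc) := by
    funext i
    rcases i with i | i | j
    · show (x (Sum.inl (Sum.inl i)), (0 : V)) = uA i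
      have h1 : x (Sum.inl (Sum.inl i)) = (uA i).1 := hx (Sum.inl i)
      rw [h1]
      exact Prod.ext rfl (hA2 i).symm
    · show ((0 : V), y (Sum.inl (Sum.inl i))) = uB i
      have h1 : y (Sum.inl (Sum.inl i)) = (uB i).2 := hy (Sum.inl i)
      rw [h1]
      exact Prod.ext (hB1 i).symm rfl
    · show (x (Sum.inl (Sum.inr j)), y (Sum.inl (Sum.inr j))) = wc j
      have h1 : x (Sum.inl (Sum.inr j)) = (wc j).1 := hx (Sum.inr j)
      have h2 : y (Sum.inl (Sum.inr j)) = (wc j).2 := hy (Sum.inr j)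
      rw [h1, h2]
  rw [hfun, Set.Sum.elim_range, Set.Sum.elim_range, Submodule.span_union, Submodule.span_union,
    hA_span, hB_span, hC_span, ← sup_assoc]
  exact hsupW.symm

end helpers

/-- Let `K` be a division ring and `V` a finite-dimensional `K`-vector
space with `dim_K V = N`.  Two subspaces `W, W'` of `V × V` with
`dim_K W = dim_K W' = N` lie in the same orbit of the action of `GL(V) × GL(V)` on
subspaces of `V × V` (by `(g₁,g₂) · W = (g₁ × g₂)(W)`) if and only if
`dim_K (W ⊓ (V × 0)) = dim_K (W' ⊓ (V × 0))` and
`dim_K (W ⊓ (0 × V)) = dim_K (W' ⊓ (0 × V))`. -/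
theorem same_orbit_iff_dim_inter_eq
    (K : Type*) [DivisionRing K] (V : Type*) [AddCommGroup V] [Module K V]
    [FiniteDimensional K V] (N : ℕ) (hV : finrank K V = N)
    (W W' : Submodule K (V × V))
    (hW_dim : finrank K ↥W = N) (hW'_dim : finrank K ↥W' = N) :
    (∃ g₁ g₂ : V ≃ₗ[K] V,
        Submodule.map (LinearMap.prodMap (g₁ : V →ₗ[K] V) (g₂ : V →ₗ[K] V)) W = W') ↔
      (finrank K ↥(W ⊓ Submodule.fst K V V) = finrank K ↥(W' ⊓ Submodule.fst K V V) ∧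
       finrank K ↥(W ⊓ Submodule.snd K V V) = finrank K ↥(W' ⊓ Submodule.snd K V V)) := by
  constructor
  · rintro ⟨g₁, g₂, rfl⟩
    set e : (V × V) ≃ₗ[K] V × V := g₁.prodCongr g₂ with he_def
    have he : LinearMap.prodMap (g₁ : V →ₗ[K] V) (g₂ : V →ₗ[K] V) = (e : V × V →ₗ[K] V × V) :=
      (LinearEquiv.coe_prodCongr g₁ g₂).symm
    have hinj : Function.Injective (e : V × V →ₗ[K] V × V) := e.injective
    have hfst : Submodule.map (e : V × V →ₗ[K] V × V) (Submodule.fst K V V)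
        = Submodule.fst K V V := by
      ext z
      simp only [Submodule.mem_map]
      constructor
      · rintro ⟨w, hw, rfl⟩
        have hw2 : w.2 = 0 := (Submodule.mem_bot K).mp (Submodule.mem_comap.mp hw)
        show (e w).2 ∈ (⊥ : Submodule K V)
        rw [Submodule.mem_bot]
        show g₂ w.2 = 0
        rw [hw2, map_zero]
      · intro hz
        have hz2 : z.2 = 0 := (Submodule.mem_bot K).mp (Submodule.mem_comap.mp hz)
        refine ⟨(g₁.symm z.1, 0), ?_, ?_⟩
        · show (0 : V) ∈ (⊥ : Submodule K V); exact Submodule.mem_bot K |>.mpr rfl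
        · show (g₁ (g₁.symm z.1), g₂ 0) = z
          rw [g₁.apply_symm_apply, map_zero]
          exact Prod.ext rfl hz2.symm
    have hsnd : Submodule.map (e : V × V →ₗ[K] V × V) (Submodule.snd K V V)
        = Submodule.snd K V V := by
      ext z
      simp only [Submodule.mem_map]
      constructor
      · rintro ⟨w, hw, rfl⟩
        have hw1 : w.1 = 0 := (Submodule.mem_bot K).mp (Submodule.mem_comap.mp hw)
        show (e w).1 ∈ (⊥ : Submodule K V)
        rw [Submodule.mem_bot]
        show g₁ w.1 = 0
        rw [hw1, map_zero]
      · intro hz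
        have hz1 : z.1 = 0 := (Submodule.mem_bot K).mp (Submodule.mem_comap.mp hz)
        refine ⟨(0, g₂.symm z.2), ?_, ?_⟩
        · show (0 : V) ∈ (⊥ : Submodule K V); exact Submodule.mem_bot K |>.mpr rfl
        · show (g₁ 0, g₂ (g₂.symm z.2)) = z
          rw [g₂.apply_symm_apply, map_zero]
          exact Prod.ext hz1.symm rfl
    have key1 : Submodule.map (e : V × V →ₗ[K] V × V) W ⊓ Submodule.fst K V V
        = Submodule.map (e : V × V →ₗ[K] V × V) (W ⊓ Submodule.fst K V V) := by
      rw [Submodule.map_inf _ hinj, hfst]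
    have key2 : Submodule.map (e : V × V →ₗ[K] V × V) W ⊓ Submodule.snd K V V
        = Submodule.map (e : V × V →ₗ[K] V × V) (W ⊓ Submodule.snd K V V) := by
      rw [Submodule.map_inf _ hinj, hsnd]
    constructor
    · rw [he, key1, LinearEquiv.finrank_map_eq]
    · rw [he, key2, LinearEquiv.finrank_map_eq]
  · rintro ⟨h1, h2⟩
    obtain ⟨a, ha⟩ : ∃ a, finrank K ↥(W ⊓ Submodule.fst K V V) = a := ⟨_, rfl⟩
    obtain ⟨b, hb⟩ : ∃ b, finrank K ↥(W ⊓ Submodule.snd K V V) = b := ⟨_, rfl⟩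
    rw [ha] at h1
    rw [hb] at h2
    have hab_le : a + b ≤ N := by
      have hbot : (W ⊓ Submodule.fst K V V) ⊓ (W ⊓ Submodule.snd K V V) = ⊥ := by
        rw [eq_bot_iff]
        intro z hz
        rw [Submodule.mem_inf] at hz
        have hz1 : z ∈ Submodule.fst K V V ⊓ Submodule.snd K V V :=
          Submodule.mem_inf.mpr
            ⟨(Submodule.mem_inf.mp hz.1).2, (Submodule.mem_inf.mp hz.2).2⟩
        rwa [Submodule.fst_inf_snd] at hz1
      have hsum := Submodule.finrank_sup_add_finrank_inf_eq
        (W ⊓ Submodule.fst K V V) (W ⊓ Submodule.snd K V V)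
      rw [hbot, finrank_bot, ha, hb] at hsum
      have hle : finrank K ↥((W ⊓ Submodule.fst K V V) ⊔ (W ⊓ Submodule.snd K V V))
          ≤ finrank K ↥W :=
        Submodule.finrank_mono (sup_le inf_le_left inf_le_left)
      rw [hW_dim] at hle
      omega
    have hc : a + b + (N - a - b) = N := by omega
    obtain ⟨x, y, hxy⟩ := std_form hV W hW_dim ha hb hc
    obtain ⟨x', y', hxy'⟩ := std_form hV W' hW'_dim h1.symm h2.symm hc
    refine ⟨x.equiv x' (Equiv.refl _), y.equiv y' (Equiv.refl _), ?_⟩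
    rw [hxy, hxy', Submodule.map_span, ← Set.range_comp]
    apply congrArg (Submodule.span K)
    apply congrArg Set.range
    funext i
    rcases i with i | i | j <;>
      simp [genFam, Basis.equiv_apply, LinearMap.prodMap_apply, Function.comp]
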